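/- The measure with density 1/(1+xy)^2 on [0,1)×[0,1) is invariant under the natural extension of the Gauss map, defined by Ḡ(x,y) = (1/x - k, 1/(k+y)) for x ∈ (1/(k+1), 1/k], k ≥ 1, and Ḡ(0,y) = (0,y). -/

import Mathlib

open MeasureTheory

/-- The natural extension of the Gauss map. -/
noncomputable def gaussNatExt (p : ℝ × ℝ) : ℝ × ℝ :=
  if p.1 = 0 then (0, p.2)
  else (1/p.1 - ⌊1/p.1⌋, 1/((⌊1/p.1⌋ : ℝ) + p.2))

/-- The measure with density 1/(1+xy)² on [0,1)×[0,1). -/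
noncomputable def gaussMeasure : Measure (ℝ × ℝ) :=
  ((volume : Measure (ℝ × ℝ)).restrict (Set.Ico 0 1 ×ˢ Set.Ico 0 1)).withDensity
    (fun p => ENNReal.ofReal (1 / (1 + p.1 * p.2)^2))

open Set

noncomputable def gT (k : ℕ) (p : ℝ × ℝ) : ℝ × ℝ := (1/p.1 - k, 1/((k:ℝ) + p.2))
def gS (n : ℕ) : Set (ℝ × ℝ) := Ioc (1/(n+2) : ℝ) (1/(n+1)) ×ˢ Ico (0:ℝ) 1
def gW (n : ℕ) : Set (ℝ × ℝ) := Ico (0:ℝ) 1 ×ˢ Ioc (1/(n+2) : ℝ) (1/(n+1))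
noncomputable def gρ (p : ℝ × ℝ) : ENNReal := ENNReal.ofReal (1 / (1 + p.1 * p.2)^2)

noncomputable def gB (k : ℕ) (p : ℝ × ℝ) : ℝ × ℝ →L[ℝ] ℝ × ℝ :=
  LinearMap.toContinuousLinearMap (Matrix.toLin (Module.Basis.finTwoProd ℝ) (Module.Basis.finTwoProd ℝ)
    !![-(p.1^2)⁻¹, 0; 0, -((k + p.2)^2)⁻¹])

theorem gB_det (k : ℕ) (p : ℝ × ℝ) : (gB k p).det = (p.1^2 * ((k:ℝ) + p.2)^2)⁻¹ := by
  simp only [gB, LinearMap.det_toContinuousLinearMap, LinearMap.det_toLin,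
    Matrix.det_fin_two_of]
  field_simp
  simp

theorem hasFDerivAt_gT (k : ℕ) (p : ℝ × ℝ) (hx : p.1 ≠ 0) (hy : (k:ℝ) + p.2 ≠ 0) :
    HasFDerivAt (gT k) (gB k p) p := by
  unfold gB
  rw [Matrix.toLin_finTwoProd_toContinuousLinearMap]
  have h1 : HasFDerivAt (fun q : ℝ × ℝ => 1/q.1 - (k:ℝ))
      ((-(p.1^2)⁻¹) • ContinuousLinearMap.fst ℝ ℝ ℝ) p := by
    have := (((hasDerivAt_inv hx).sub_const (k:ℝ))).comp_hasFDerivAt (𝕜 := ℝ) p hasFDerivAt_fst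
    simp only [Function.comp_def, one_div] at this ⊢; exact this
  have h2 : HasFDerivAt (fun q : ℝ × ℝ => 1/((k:ℝ) + q.2))
      ((-(((k:ℝ) + p.2)^2)⁻¹) • ContinuousLinearMap.snd ℝ ℝ ℝ) p := by
    have : HasDerivAt (fun y : ℝ => 1/((k:ℝ) + y)) (-(((k:ℝ)+p.2)^2)⁻¹) p.2 := by
      simpa [one_div, Function.comp_def] using ((hasDerivAt_inv hy).comp p.2 ((hasDerivAt_id p.2).const_add (k:ℝ)))
    have := this.comp_hasFDerivAt (𝕜 := ℝ) p hasFDerivAt_snd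
    simp only [Function.comp_def] at this; exact this
  exact (h1.prodMk h2).congr_fderiv (by ext <;> simp)

theorem aux_le {a x : ℝ} (ha : 0 < a) (hx : 0 < x) (h : x ≤ 1/a) : a ≤ 1/x := by
  rw [le_div_iff₀ ha] at h; rw [le_div_iff₀ hx]; linarith [mul_comm x a]

theorem aux_lt {a x : ℝ} (ha : 0 < a) (hx : 0 < x) (h : 1/a < x) : 1/x < a := by
  rw [div_lt_iff₀ ha] at h; rw [div_lt_iff₀ hx]; linarith [mul_comm x a]

theorem gS_pos {n : ℕ} {p : ℝ × ℝ} (hp : p ∈ gS n) :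
    0 < p.1 ∧ 0 < (n:ℝ) + 1 + p.2 := by
  obtain ⟨⟨h1, _⟩, h3, _⟩ := hp
  exact ⟨lt_trans (by positivity) h1, by positivity⟩

theorem gT_image (n : ℕ) : gT (n + 1) '' gS n = gW n := by
  ext ⟨u, v⟩
  constructor
  · rintro ⟨⟨x, y⟩, ⟨⟨hx1, hx2⟩, hy1, hy2⟩, h⟩
    simp only [gT, Prod.mk.injEq] at h
    obtain ⟨hu, hv⟩ := h
    simp only at hx1 hx2 hy1 hy2
    have hx0 : (0:ℝ) < x := lt_trans (by positivity) hx1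
    have hky : (0:ℝ) < (n:ℝ) + 1 + y := by positivity
    push_cast at hu hv
    have h1 : (n:ℝ) + 1 ≤ 1/x := aux_le (by positivity) hx0 hx2
    have h2 : 1/x < (n:ℝ) + 2 := aux_lt (by positivity) hx0 hx1
    refine ⟨⟨by linarith, by linarith⟩, ?_, ?_⟩
    · rw [← hv]
      exact one_div_lt_one_div_of_lt (by positivity) (by linarith)
    · rw [← hv]
      exact one_div_le_one_div_of_le (by positivity) (by linarith)
  · rintro ⟨⟨hu1, hu2⟩, hv1, hv2⟩
    simp only at hu1 hu2 hv1 hv2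
    have hv0 : (0:ℝ) < v := lt_trans (by positivity) hv1
    have h1 : (n:ℝ) + 1 ≤ 1/v := aux_le (by positivity) hv0 hv2
    have h2 : 1/v < (n:ℝ) + 2 := aux_lt (by positivity) hv0 hv1
    have huk : (0:ℝ) < u + ((n:ℝ) + 1) := by positivity
    refine ⟨(1/(u + ((n:ℝ)+1)), 1/v - ((n:ℝ)+1)), ⟨⟨?_, ?_⟩, ?_, ?_⟩, ?_⟩
    · exact one_div_lt_one_div_of_lt (by positivity) (by linarith)
    · exact one_div_le_one_div_of_le (by positivity) (by linarith)
    · simp only [sub_nonneg]; exact h1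
    · simp only; linarith
    · simp only [gT, Prod.mk.injEq]
      push_cast
      constructor
      · rw [one_div_one_div]; ring
      · rw [show (n:ℝ) + 1 + (1/v - ((n:ℝ)+1)) = 1/v by ring, one_div_one_div]

theorem gT_injOn (n : ℕ) : InjOn (gT (n+1)) (gS n) := by
  rintro ⟨x1, y1⟩ h1 ⟨x2, y2⟩ h2 h
  obtain ⟨hx1, hy1⟩ := gS_pos h1
  obtain ⟨hx2, hy2⟩ := gS_pos h2
  simp only [gT, Prod.mk.injEq] at h
  obtain ⟨ha, hb⟩ := h
  simp only at hx1 hx2 hy1 hy2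
  push_cast at ha hb
  have hx : x1 = x2 := by
    have h' : 1/x1 = 1/x2 := by linarith
    field_simp at h'; linarith
  have hy : y1 = y2 := by
    have h1' : ((n:ℝ)+1) + y1 ≠ 0 := by positivity
    have h2' : ((n:ℝ)+1) + y2 ≠ 0 := by positivity
    field_simp at hb
    linarith
  simp [hx, hy]

theorem gT_measurable (k : ℕ) : Measurable (gT k) := by
  unfold gT
  exact ((measurable_const.div measurable_fst).sub measurable_const).prod
    (measurable_const.div (measurable_const.add measurable_snd))

theorem measurableSet_gS (n : ℕ) : MeasurableSet (gS n) :=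
  measurableSet_Ioc.prod measurableSet_Ico

theorem strip_cov (n : ℕ) {A : Set (ℝ × ℝ)} (hA : MeasurableSet A) :
    ∫⁻ p in (gT (n+1) ⁻¹' A) ∩ gS n, gρ p = ∫⁻ p in A ∩ gW n, gρ p := by
  set s' : Set (ℝ × ℝ) := (gT (n+1) ⁻¹' A) ∩ gS n with hs'
  have hs : MeasurableSet s' := (gT_measurable (n+1) hA).inter (measurableSet_gS n)
  have himg : gT (n+1) '' s' = A ∩ gW n := by
    rw [hs', inter_comm, image_inter_preimage, gT_image, inter_comm]
  have hder : ∀ p ∈ s', HasFDerivWithinAt (gT (n+1)) (gB (n+1) p) s' p := by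
    intro p hp
    obtain ⟨hx, hy⟩ := gS_pos hp.2
    refine (hasFDerivAt_gT (n+1) p hx.ne' ?_).hasFDerivWithinAt
    push_cast; exact hy.ne'
  have hinj : InjOn (gT (n+1)) s' := (gT_injOn n).mono inter_subset_right
  rw [← himg, lintegral_image_eq_lintegral_abs_det_fderiv_mul volume hs hder hinj gρ]
  apply setLIntegral_congr_fun hs
  intro p hp
  beta_reduce
  obtain ⟨hx, hy⟩ := gS_pos hp.2
  have h1xy : (0:ℝ) < 1 + p.1 * p.2 := by nlinarith [hp.2.2.1]
  rw [gB_det]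
  simp only [gρ, gT]
  have hky : (0:ℝ) < ((n+1:ℕ):ℝ) + p.2 := by push_cast; exact hy
  have hdpos : (0:ℝ) < (p.1^2 * (((n+1:ℕ):ℝ) + p.2)^2)⁻¹ :=
    inv_pos.2 (mul_pos (pow_pos hx 2) (pow_pos hky 2))
  rw [abs_of_pos hdpos, ← ENNReal.ofReal_mul hdpos.le]
  congr 1
  -- (cast already normalized)
  have h2 : 1 + (1/p.1 - ((n:ℕ)+1:ℕ)) * (1/(((n:ℕ)+1:ℕ) + p.2)) = (1 + p.1*p.2)/(p.1 * (((n:ℝ)+1) + p.2)) := by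
    push_cast
    field_simp
    ring
  rw [h2]
  push_cast
  rw [div_pow, one_div_div]
  field_simp

theorem measurableSet_gW (n : ℕ) : MeasurableSet (gW n) :=
  measurableSet_Ico.prod measurableSet_Ioc

theorem gauss_eq_gT {n : ℕ} {p : ℝ × ℝ} (hp : p ∈ gS n) :
    gaussNatExt p = gT (n+1) p := by
  obtain ⟨⟨hx1, hx2⟩, hy1, hy2⟩ := hp
  have hx0 : (0:ℝ) < p.1 := lt_trans (by positivity) hx1
  have hfl : ⌊1/p.1⌋ = (n:ℤ) + 1 := by
    rw [Int.floor_eq_iff]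
    constructor
    · push_cast
      exact aux_le (by positivity) hx0 hx2
    · push_cast
      have h2 := aux_lt (show (0:ℝ) < (n:ℝ)+2 by positivity) hx0 hx1
      linarith
  simp only [gaussNatExt, gT, if_neg hx0.ne', hfl]
  push_cast
  ring_nf

theorem iUnion_Iocs : ⋃ n : ℕ, Ioc (1/(n+2) : ℝ) (1/(n+1)) = Ioc (0:ℝ) 1 := by
  ext x
  simp only [mem_iUnion, mem_Ioc]
  constructor
  · rintro ⟨n, h1, h2⟩
    have : (0:ℝ) < 1/((n:ℝ)+2) := by positivity
    refine ⟨by linarith, h2.trans ?_⟩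
    rw [div_le_one (by positivity)]
    linarith [Nat.cast_nonneg (α := ℝ) n]
  · rintro ⟨hx0, hx1⟩
    have h1x : (1:ℝ) ≤ 1/x := by
      rw [le_div_iff₀ hx0]; linarith
    set k := ⌊1/x⌋₊ with hk
    have hk1 : 1 ≤ k := Nat.le_floor (by exact_mod_cast h1x)
    have hkle : (k:ℝ) ≤ 1/x := Nat.floor_le (by positivity)
    have hklt : 1/x < (k:ℝ) + 1 := Nat.lt_floor_add_one _
    refine ⟨k - 1, ?_, ?_⟩
    · have hc : ((k-1:ℕ):ℝ) = (k:ℝ) - 1 := by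
        push_cast [hk1]; ring
      rw [hc, show (k:ℝ) - 1 + 2 = (k:ℝ) + 1 by ring]
      exact aux_lt hx0 (by positivity) hklt
    · have hc : ((k-1:ℕ):ℝ) = (k:ℝ) - 1 := by
        push_cast [hk1]; ring
      rw [hc, show (k:ℝ) - 1 + 1 = (k:ℝ) by ring]
      have hkpos : (0:ℝ) < k := by exact_mod_cast hk1
      exact aux_le hx0 hkpos hkle

theorem null_vline (a : ℝ) : volume (({a} : Set ℝ) ×ˢ (univ : Set ℝ)) = 0 := by
  rw [Measure.volume_eq_prod, Measure.prod_prod, Real.volume_singleton, zero_mul]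

theorem null_hline (b : ℝ) : volume ((univ : Set ℝ) ×ˢ ({b} : Set ℝ)) = 0 := by
  rw [Measure.volume_eq_prod, Measure.prod_prod, Real.volume_singleton, mul_zero]

theorem gaussNatExt_measurable : Measurable gaussNatExt := by
  unfold gaussNatExt
  have h0 : MeasurableSet {p : ℝ × ℝ | p.1 = 0} := measurable_fst (measurableSet_singleton 0)
  apply Measurable.ite h0
  · exact measurable_const.prodMk measurable_snd
  · have hfl : Measurable fun p : ℝ × ℝ => ((⌊1/p.1⌋ : ℤ) : ℝ) :=
      measurable_from_top.comp ((measurable_const.div measurable_fst).floor)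
    exact ((measurable_const.div measurable_fst).sub hfl).prodMk
      (measurable_const.div (hfl.add measurable_snd))

theorem gaussMeasure_apply {B : Set (ℝ × ℝ)} (hB : MeasurableSet B) :
    gaussMeasure B = ∫⁻ p in B ∩ (Ico (0:ℝ) 1 ×ˢ Ico (0:ℝ) 1), gρ p := by
  rw [gaussMeasure, withDensity_apply _ hB, Measure.restrict_restrict hB]
  rfl

theorem gS_disjoint : Pairwise (Function.onFun Disjoint gS) := by
  intro m n hmn
  apply Disjoint.set_prod_left
  rcases hmn.lt_or_gt with h | h
  · rw [Set.Ioc_disjoint_Ioc]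
    refine le_trans (min_le_right _ _) (le_trans ?_ (le_max_left _ _))
    apply one_div_le_one_div_of_le (by positivity)
    have : (n:ℝ) ≥ (m:ℝ) + 1 := by exact_mod_cast h
    linarith
  · rw [Set.Ioc_disjoint_Ioc]
    refine le_trans (min_le_left _ _) (le_trans ?_ (le_max_right _ _))
    apply one_div_le_one_div_of_le (by positivity)
    have : (m:ℝ) ≥ (n:ℝ) + 1 := by exact_mod_cast h
    linarith

theorem gW_disjoint : Pairwise (Function.onFun Disjoint gW) := by
  intro m n hmn
  apply Disjoint.set_prod_right
  rcases hmn.lt_or_gt with h | h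
  · rw [Set.Ioc_disjoint_Ioc]
    refine le_trans (min_le_right _ _) (le_trans ?_ (le_max_left _ _))
    apply one_div_le_one_div_of_le (by positivity)
    have : (n:ℝ) ≥ (m:ℝ) + 1 := by exact_mod_cast h
    linarith
  · rw [Set.Ioc_disjoint_Ioc]
    refine le_trans (min_le_left _ _) (le_trans ?_ (le_max_right _ _))
    apply one_div_le_one_div_of_le (by positivity)
    have : (m:ℝ) ≥ (n:ℝ) + 1 := by exact_mod_cast h
    linarith

theorem gaussNatExt_invariant :
    ∀ A : Set (ℝ × ℝ), MeasurableSet A →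
      gaussMeasure (gaussNatExt ⁻¹' A) = gaussMeasure A := by
  intro A hA
  have hGA : MeasurableSet (gaussNatExt ⁻¹' A) := gaussNatExt_measurable hA
  rw [gaussMeasure_apply hGA, gaussMeasure_apply hA]
  have h1 : ∀ n, (gT (n+1) ⁻¹' A) ∩ gS n = (gaussNatExt ⁻¹' A) ∩ gS n := by
    intro n
    ext p
    simp only [mem_inter_iff, mem_preimage, and_congr_left_iff]
    intro hp
    rw [gauss_eq_gT hp]
  have hUS : (⋃ n, gS n) = Ioc (0:ℝ) 1 ×ˢ Ico (0:ℝ) 1 := by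
    simp only [gS]
    rw [← Set.iUnion_prod_const, iUnion_Iocs]
  have hUW : (⋃ n, gW n) = Ico (0:ℝ) 1 ×ˢ Ioc (0:ℝ) 1 := by
    simp only [gW]
    rw [← Set.prod_iUnion, iUnion_Iocs]
  have hU : (⋃ n, (gT (n+1) ⁻¹' A) ∩ gS n) =
      (gaussNatExt ⁻¹' A) ∩ (Ioc (0:ℝ) 1 ×ˢ Ico (0:ℝ) 1) := by
    calc (⋃ n, (gT (n+1) ⁻¹' A) ∩ gS n) = ⋃ n, (gaussNatExt ⁻¹' A) ∩ gS n := by simp_rw [h1]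
      _ = (gaussNatExt ⁻¹' A) ∩ ⋃ n, gS n := (Set.inter_iUnion _ _).symm
      _ = _ := by rw [hUS]
  have hLae : ((gaussNatExt ⁻¹' A) ∩ (Ico (0:ℝ) 1 ×ˢ Ico (0:ℝ) 1) : Set (ℝ × ℝ))
      =ᵐ[volume] (⋃ n, (gT (n+1) ⁻¹' A) ∩ gS n : Set (ℝ × ℝ)) := by
    rw [hU]
    rw [MeasureTheory.ae_eq_set]
    constructor
    · apply measure_mono_null _ (null_vline 0)
      rintro ⟨x, y⟩ ⟨⟨hG, ⟨hx0, hx1⟩, hy⟩, hn⟩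
      have hni : x ∉ Ioc (0:ℝ) 1 := fun hx => hn ⟨hG, hx, hy⟩
      have hx : x = 0 := by
        by_contra h
        exact hni ⟨lt_of_le_of_ne hx0 (Ne.symm h), hx1.le⟩
      exact ⟨hx, mem_univ _⟩
    · apply measure_mono_null _ (null_vline 1)
      rintro ⟨x, y⟩ ⟨⟨hG, ⟨hx0, hx1⟩, hy⟩, hn⟩
      have hni : x ∉ Ico (0:ℝ) 1 := fun hx => hn ⟨hG, hx, hy⟩
      have hx : x = 1 := by
        by_contra h
        exact hni ⟨hx0.le, lt_of_le_of_ne hx1 h⟩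
      exact ⟨hx, mem_univ _⟩
  have hRae : (A ∩ (Ico (0:ℝ) 1 ×ˢ Ico (0:ℝ) 1) : Set (ℝ × ℝ))
      =ᵐ[volume] (⋃ n, A ∩ gW n : Set (ℝ × ℝ)) := by
    have : (⋃ n, A ∩ gW n) = A ∩ (Ico (0:ℝ) 1 ×ˢ Ioc (0:ℝ) 1) := by
      rw [← Set.inter_iUnion, hUW]
    rw [this, MeasureTheory.ae_eq_set]
    constructor
    · apply measure_mono_null _ (null_hline 0)
      rintro ⟨x, y⟩ ⟨⟨hG, hx, hy0, hy1⟩, hn⟩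
      have hni : y ∉ Ioc (0:ℝ) 1 := fun hy => hn ⟨hG, hx, hy⟩
      have hy : y = 0 := by
        by_contra h
        exact hni ⟨lt_of_le_of_ne hy0 (Ne.symm h), hy1.le⟩
      exact ⟨mem_univ _, hy⟩
    · apply measure_mono_null _ (null_hline 1)
      rintro ⟨x, y⟩ ⟨⟨hG, hx, hy0, hy1⟩, hn⟩
      have hni : y ∉ Ico (0:ℝ) 1 := fun hy => hn ⟨hG, hx, hy⟩
      have hy : y = 1 := by
        by_contra h
        exact hni ⟨hy0.le, lt_of_le_of_ne hy1 h⟩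
      exact ⟨mem_univ _, hy⟩
  rw [setLIntegral_congr hLae, setLIntegral_congr hRae,
    lintegral_iUnion (fun n => ((gT_measurable (n+1)) hA).inter (measurableSet_gS n))
      (fun m n hmn => ((gS_disjoint hmn).mono inter_subset_right inter_subset_right)),
    lintegral_iUnion (fun n => hA.inter (measurableSet_gW n))
      (fun m n hmn => ((gW_disjoint hmn).mono inter_subset_right inter_subset_right))]
  exact tsum_congr fun n => strip_cov n hA
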